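/- Let L and L' be empirical losses differing in a single sample: L = (1/N)[ℓ_p(ΘW_u x_i, y_i) + ℓ_r(ΘW_e y_i, y_i) + S(Θ)] and L' = (1/N)[ℓ_p(ΘW_u x'_i, y'_i) + ℓ_r(ΘW_e y'_i, y'_i) + S(Θ)] for a common term S. If ℓ_p is σ_p-admissible and ℓ_r is σ_r-admissible, then for minimizers Θ_* of L and Θ'_* of L', D_L(Θ'_*‖Θ_*) + D_{L'}(Θ_*‖Θ'_*) ≤ (σ_p/N)(‖(Θ'_*−Θ_*)W_u x_i‖ + ‖(Θ'_*−Θ_*)W_u x'_i‖) + (σ_r/N)(‖(Θ'_*−Θ_*)W_e y_i‖ + ‖(Θ'_*−Θ_*)W_e y'_i‖). -/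
import Mathlib


/-- Third step of the stability proof: losses differing in a single sample. Since the
gradients of `L` and `L'` vanish at the respective minimizers `Θ⋆`, `Θ'⋆`, the Bregman
distances reduce to `D_L(Θ'⋆‖Θ⋆) = L(Θ'⋆) − L(Θ⋆)` and
`D_{L'}(Θ⋆‖Θ'⋆) = L'(Θ⋆) − L'(Θ'⋆)`; their sum is bounded via σ-admissibility. -/
theorem one_sample_bregman_bound {X Z Y : Type*}
    [NormedAddCommGroup X] [InnerProductSpace ℝ X] [FiniteDimensional ℝ X]
    [NormedAddCommGroup Z] [InnerProductSpace ℝ Z] [FiniteDimensional ℝ Z]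
    [NormedAddCommGroup Y] [InnerProductSpace ℝ Y] [FiniteDimensional ℝ Y]
    (Wu : X →ₗ[ℝ] Z) (We : Y →ₗ[ℝ] Z)
    (ℓp ℓr : Y → Y → ℝ) (σp σr : ℝ) (hσp : 0 < σp) (hσr : 0 < σr)
    (hadmp : ∀ u u' yv : Y, |ℓp u' yv - ℓp u yv| ≤ σp * ‖u' - u‖)
    (hadmr : ∀ u u' yv : Y, |ℓr u' yv - ℓr u yv| ≤ σr * ‖u' - u‖)
    (hpconv : ∀ yv : Y, ConvexOn ℝ Set.univ (fun u => ℓp u yv))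
    (hrconv : ∀ yv : Y, ConvexOn ℝ Set.univ (fun u => ℓr u yv))
    (N : ℕ) (hN : 0 < N) (S : (Z →ₗ[ℝ] Y) → ℝ)
    (xi xi' : X) (yi yi' : Y)
    (L L' : (Z →ₗ[ℝ] Y) → ℝ)
    (hL : L = fun Θ => (1 / (N : ℝ)) *
      (ℓp (Θ (Wu xi)) yi + ℓr (Θ (We yi)) yi + S Θ))
    (hL' : L' = fun Θ => (1 / (N : ℝ)) *
      (ℓp (Θ (Wu xi')) yi' + ℓr (Θ (We yi')) yi' + S Θ))
    (Θs Θs' : Z →ₗ[ℝ] Y)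
    (hmin : ∀ Θ, L Θs ≤ L Θ) (hmin' : ∀ Θ, L' Θs' ≤ L' Θ) :
    (L Θs' - L Θs) + (L' Θs - L' Θs')
      ≤ (σp / N) * (‖(Θs' - Θs) (Wu xi)‖ + ‖(Θs' - Θs) (Wu xi')‖)
        + (σr / N) * (‖(Θs' - Θs) (We yi)‖ + ‖(Θs' - Θs) (We yi')‖) := by
  subst hL hL'
  have hNpos : (0:ℝ) < (N:ℝ) := by exact_mod_cast hN
  have h1 : ℓp (Θs' (Wu xi)) yi - ℓp (Θs (Wu xi)) yi ≤ σp * ‖(Θs' - Θs) (Wu xi)‖ := by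
    simpa [LinearMap.sub_apply] using (le_abs_self _).trans (hadmp (Θs (Wu xi)) (Θs' (Wu xi)) yi)
  have h2 : ℓp (Θs (Wu xi')) yi' - ℓp (Θs' (Wu xi')) yi' ≤ σp * ‖(Θs' - Θs) (Wu xi')‖ := by
    have := (le_abs_self _).trans (hadmp (Θs' (Wu xi')) (Θs (Wu xi')) yi')
    simpa [LinearMap.sub_apply, norm_sub_rev] using this
  have h3 : ℓr (Θs' (We yi)) yi - ℓr (Θs (We yi)) yi ≤ σr * ‖(Θs' - Θs) (We yi)‖ := by
    simpa [LinearMap.sub_apply] using (le_abs_self _).trans (hadmr (Θs (We yi)) (Θs' (We yi)) yi)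
  have h4 : ℓr (Θs (We yi')) yi' - ℓr (Θs' (We yi')) yi' ≤ σr * ‖(Θs' - Θs) (We yi')‖ := by
    have := (le_abs_self _).trans (hadmr (Θs' (We yi')) (Θs (We yi')) yi')
    simpa [LinearMap.sub_apply, norm_sub_rev] using this
  have hinv : (0:ℝ) ≤ 1 / (N:ℝ) := by positivity
  have hsum : (ℓp (Θs' (Wu xi)) yi - ℓp (Θs (Wu xi)) yi)
      + (ℓr (Θs' (We yi)) yi - ℓr (Θs (We yi)) yi)
      + (ℓp (Θs (Wu xi')) yi' - ℓp (Θs' (Wu xi')) yi')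
      + (ℓr (Θs (We yi')) yi' - ℓr (Θs' (We yi')) yi')
      ≤ σp * (‖(Θs' - Θs) (Wu xi)‖ + ‖(Θs' - Θs) (Wu xi')‖)
        + σr * (‖(Θs' - Θs) (We yi)‖ + ‖(Θs' - Θs) (We yi')‖) := by linarith
  have := mul_le_mul_of_nonneg_left hsum hinv
  calc (fun Θ => 1 / (N:ℝ) * (ℓp (Θ (Wu xi)) yi + ℓr (Θ (We yi)) yi + S Θ)) Θs'
        - (fun Θ => 1 / (N:ℝ) * (ℓp (Θ (Wu xi)) yi + ℓr (Θ (We yi)) yi + S Θ)) Θs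
      + ((fun Θ => 1 / (N:ℝ) * (ℓp (Θ (Wu xi')) yi' + ℓr (Θ (We yi')) yi' + S Θ)) Θs
        - (fun Θ => 1 / (N:ℝ) * (ℓp (Θ (Wu xi')) yi' + ℓr (Θ (We yi')) yi' + S Θ)) Θs')
      = 1 / (N:ℝ) * ((ℓp (Θs' (Wu xi)) yi - ℓp (Θs (Wu xi)) yi)
        + (ℓr (Θs' (We yi)) yi - ℓr (Θs (We yi)) yi)
        + (ℓp (Θs (Wu xi')) yi' - ℓp (Θs' (Wu xi')) yi')
        + (ℓr (Θs (We yi')) yi' - ℓr (Θs' (We yi')) yi')) := by ring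
    _ ≤ 1 / (N:ℝ) * (σp * (‖(Θs' - Θs) (Wu xi)‖ + ‖(Θs' - Θs) (Wu xi')‖)
        + σr * (‖(Θs' - Θs) (We yi)‖ + ‖(Θs' - Θs) (We yi')‖)) := this
    _ = (σp / N) * (‖(Θs' - Θs) (Wu xi)‖ + ‖(Θs' - Θs) (Wu xi')‖)
        + (σr / N) * (‖(Θs' - Θs) (We yi)‖ + ‖(Θs' - Θs) (We yi')‖) := by ring
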